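/- Let k, m₁, m₂ be natural numbers, let H₁ be an m₁×k complex matrix, H₂ an m₂×k complex matrix, and let H be the (m₁+m₂)×k matrix obtained by stacking H₁ on top of H₂. Then for every k×k Hermitian positive semidefinite complex matrix Q, the determinants det(I + H Q H*), det(I + H₁ Q H₁*), det(I + H₂ Q H₂*) are real numbers at least 1 and det(I + H Q H*) ≤ det(I + H₁ Q H₁*) · det(I + H₂ Q H₂*), where * denotes conjugate transpose. -/

import Mathlib

open scoped ComplexOrder
open Matrix

variable {n : Type*} [Fintype n] [DecidableEq n]
open scoped MatrixOrder

private lemma det_le_one_of_le_one {M : Matrix n n ℂ} (hM : M.PosSemidef)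
    (h1 : (1 - M).PosSemidef) : M.det ≤ 1 := by
  have hle : ∀ i, hM.1.eigenvalues i ≤ 1 := by
    intro i
    have hnn := h1.re_dotProduct_nonneg (⇑(hM.1.eigenvectorBasis i))
    rw [sub_mulVec, one_mulVec, dotProduct_sub, map_sub] at hnn
    have hvv : RCLike.re (dotProduct (star (⇑(hM.1.eigenvectorBasis i)))
        (⇑(hM.1.eigenvectorBasis i))) = 1 := by
      have hnorm := hM.1.eigenvectorBasis.orthonormal.1 i
      rw [show (dotProduct (star (⇑(hM.1.eigenvectorBasis i))) (⇑(hM.1.eigenvectorBasis i)))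
          = (inner ℂ (hM.1.eigenvectorBasis i) (hM.1.eigenvectorBasis i) : ℂ) from dotProduct_comm _ _,
        inner_self_eq_norm_sq_to_K, hnorm]
      simp
    rw [hvv, ← hM.1.eigenvalues_eq i] at hnn
    linarith
  have hprod : (∏ i, hM.1.eigenvalues i) ≤ 1 :=
    Finset.prod_le_one (fun i _ => hM.eigenvalues_nonneg i) (fun i _ => hle i)
  rw [hM.1.det_eq_prod_eigenvalues]
  calc (∏ i, (hM.1.eigenvalues i : ℂ)) = ((∏ i, hM.1.eigenvalues i : ℝ) : ℂ) := by norm_cast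
    _ ≤ 1 := by exact_mod_cast hprod

private lemma det_mono {M N : Matrix n n ℂ} (hM : M.PosSemidef)
    (hs : (N - M).PosSemidef) (hN : N.PosDef) : M.det ≤ N.det := by
  set S := CFC.sqrt N with hSdef
  have hS : S.PosSemidef := (CFC.sqrt_nonneg N).posSemidef
  have hSS : S * S = N := CFC.sqrt_mul_sqrt_self N hN.posSemidef.nonneg
  have hdetS : IsUnit S.det := by
    have h2 : S.det * S.det = N.det := by rw [← det_mul, hSS]
    rw [isUnit_iff_ne_zero]
    intro h
    rw [h, mul_zero] at h2
    exact hN.det_pos.ne' h2.symm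
  have hSinvH : (S⁻¹)ᴴ = S⁻¹ := by rw [conjTranspose_nonsing_inv, hS.1.eq]
  have hX : (S⁻¹ * M * S⁻¹).PosSemidef := by
    simpa [hSinvH] using hM.conjTranspose_mul_mul_same S⁻¹
  have hone : S⁻¹ * N * S⁻¹ = 1 := by
    rw [← hSS, Matrix.nonsing_inv_mul_cancel_left _ _ hdetS, Matrix.mul_nonsing_inv _ hdetS]
  have h1X : (1 - S⁻¹ * M * S⁻¹).PosSemidef := by
    have h3 : 1 - S⁻¹ * M * S⁻¹ = S⁻¹ * (N - M) * S⁻¹ := by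
      rw [Matrix.mul_sub, Matrix.sub_mul, hone]
    rw [h3]
    simpa [hSinvH] using hs.conjTranspose_mul_mul_same S⁻¹
  have hXdet : (S⁻¹ * M * S⁻¹).det ≤ 1 := det_le_one_of_le_one hX h1X
  have hM' : M = S * (S⁻¹ * M * S⁻¹) * S := by
    rw [Matrix.mul_assoc, Matrix.nonsing_inv_mul_cancel_right _ _ hdetS,
      Matrix.mul_nonsing_inv_cancel_left _ _ hdetS]
  have hMdet : M.det = (S⁻¹ * M * S⁻¹).det * N.det := by
    conv_lhs => rw [hM']
    rw [← hSS]
    simp only [det_mul]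
    ring
  rw [hMdet]
  calc (S⁻¹ * M * S⁻¹).det * N.det ≤ 1 * N.det :=
        mul_le_mul_of_nonneg_right hXdet hN.det_pos.le
    _ = N.det := one_mul _

private lemma one_le_det_one_add {A : Matrix n n ℂ} (hA : A.PosSemidef) :
    1 ≤ (1 + A).det := by
  have h := det_mono (Matrix.PosSemidef.one (n := n) (R := ℂ))
    (by simpa using hA) (Matrix.PosDef.add_posSemidef Matrix.PosDef.one hA)
  simpa using h

private lemma det_one_add_add_le {A B : Matrix n n ℂ} (hA : A.PosSemidef)
    (hB : B.PosSemidef) : (1 + A + B).det ≤ (1 + A).det * (1 + B).det := by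
  have hC : (1 + A).PosDef := Matrix.PosDef.add_posSemidef Matrix.PosDef.one hA
  set C := 1 + A with hCdef
  set S := CFC.sqrt C with hSdef
  have hS : S.PosSemidef := (CFC.sqrt_nonneg C).posSemidef
  have hSS : S * S = C := CFC.sqrt_mul_sqrt_self C hC.posSemidef.nonneg
  have hdetS : IsUnit S.det := by
    have h2 : S.det * S.det = C.det := by rw [← det_mul, hSS]
    rw [isUnit_iff_ne_zero]
    intro h
    rw [h, mul_zero] at h2
    exact hC.det_pos.ne' h2.symm
  have hSinvH : (S⁻¹)ᴴ = S⁻¹ := by rw [conjTranspose_nonsing_inv, hS.1.eq]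
  set W := CFC.sqrt B with hWdef
  have hW : W.PosSemidef := (CFC.sqrt_nonneg B).posSemidef
  have hWW : W * W = B := CFC.sqrt_mul_sqrt_self B hB.nonneg
  have hcanc : S * (S⁻¹ * B * S⁻¹) * S = B := by
    rw [Matrix.mul_assoc, Matrix.nonsing_inv_mul_cancel_right _ _ hdetS,
      Matrix.mul_nonsing_inv_cancel_left _ _ hdetS]
  have hfact : C + B = S * (1 + S⁻¹ * B * S⁻¹) * S := by
    rw [Matrix.mul_add, Matrix.add_mul, Matrix.mul_one, hSS, hcanc]
  have hdet1 : (C + B).det = C.det * (1 + S⁻¹ * B * S⁻¹).det := by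
    rw [hfact, ← hSS]
    simp only [det_mul]
    ring
  have hCinv : C⁻¹ = S⁻¹ * S⁻¹ := by rw [← hSS, Matrix.mul_inv_rev]
  have hdet2 : (1 + S⁻¹ * B * S⁻¹).det = (1 + W * C⁻¹ * W).det := by
    have h1 : 1 + S⁻¹ * B * S⁻¹ = 1 + (S⁻¹ * W) * (W * S⁻¹) := by
      rw [← hWW]; noncomm_ring
    have h2 : 1 + (W * S⁻¹) * (S⁻¹ * W) = 1 + W * C⁻¹ * W := by
      rw [hCinv]; noncomm_ring
    rw [h1, det_one_add_mul_comm, h2]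
  have hMpsd : (1 + W * C⁻¹ * W).PosSemidef := by
    have h4 : (W * C⁻¹ * W).PosSemidef := by
      have h := (hC.inv.posSemidef).conjTranspose_mul_mul_same W
      simpa [hW.1.eq] using h
    exact Matrix.PosSemidef.add .one h4
  have hNpd : (1 + B).PosDef := Matrix.PosDef.add_posSemidef Matrix.PosDef.one hB
  have hmid : S⁻¹ * A * S⁻¹ = 1 - C⁻¹ := by
    have hA' : A = C - 1 := by rw [hCdef]; abel
    rw [hA', Matrix.mul_sub, Matrix.sub_mul, Matrix.mul_one, ← hSS,
      Matrix.nonsing_inv_mul_cancel_left _ _ hdetS, Matrix.mul_nonsing_inv _ hdetS, ← hCinv,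
      hSS]
  have hsub : ((1 + B) - (1 + W * C⁻¹ * W)).PosSemidef := by
    have key : (1 + B) - (1 + W * C⁻¹ * W) = (S⁻¹ * W)ᴴ * A * (S⁻¹ * W) := by
      rw [conjTranspose_mul, hSinvH, hW.1.eq]
      have h5 : W * S⁻¹ * A * (S⁻¹ * W) = W * (S⁻¹ * A * S⁻¹) * W := by noncomm_ring
      rw [h5, hmid, Matrix.mul_sub, Matrix.sub_mul, Matrix.mul_one, hWW]
      abel
    rw [key]
    exact hA.conjTranspose_mul_mul_same _
  have hmono : (1 + W * C⁻¹ * W).det ≤ (1 + B).det := det_mono hMpsd hsub hNpd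
  have hfin : (1 + A + B).det = (C + B).det := by rw [hCdef]
  rw [hfin, hdet1, hdet2]
  calc C.det * (1 + W * C⁻¹ * W).det ≤ C.det * (1 + B).det :=
        mul_le_mul_of_nonneg_left hmono hC.det_pos.le
    _ = (1 + A).det * (1 + B).det := by rw [hCdef]

open scoped ComplexOrder
open Matrix in
theorem stmt_1 (k m₁ m₂ : ℕ)
    (H₁ : Matrix (Fin m₁) (Fin k) ℂ) (H₂ : Matrix (Fin m₂) (Fin k) ℂ)
    (H : Matrix (Fin m₁ ⊕ Fin m₂) (Fin k) ℂ) (hH : H = Matrix.fromRows H₁ H₂)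
    (Q : Matrix (Fin k) (Fin k) ℂ) (hQ : Q.PosSemidef) :
    ((1 + H * Q * H.conjTranspose).det).im = 0 ∧
    1 ≤ ((1 + H * Q * H.conjTranspose).det).re ∧
    ((1 + H₁ * Q * H₁.conjTranspose).det).im = 0 ∧
    1 ≤ ((1 + H₁ * Q * H₁.conjTranspose).det).re ∧
    ((1 + H₂ * Q * H₂.conjTranspose).det).im = 0 ∧
    1 ≤ ((1 + H₂ * Q * H₂.conjTranspose).det).re ∧
    ((1 + H * Q * H.conjTranspose).det).re ≤
      ((1 + H₁ * Q * H₁.conjTranspose).det).re *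
        ((1 + H₂ * Q * H₂.conjTranspose).det).re := by
  subst hH
  set G := CFC.sqrt Q with hGdef
  have hG : G.PosSemidef := (CFC.sqrt_nonneg Q).posSemidef
  have hGG : G * G = Q := CFC.sqrt_mul_sqrt_self Q hQ.nonneg
  have key : ∀ {m : Type} [Fintype m] (Hx : Matrix m (Fin k) ℂ),
      Hx * Q * Hxᴴ = (Hx * G) * (Hx * G)ᴴ := by
    intro m _ Hx
    rw [conjTranspose_mul, hG.1.eq, ← hGG]
    simp [Matrix.mul_assoc]
  set K₁ := H₁ * G with hK₁
  set K₂ := H₂ * G with hK₂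
  set A := K₁ᴴ * K₁ with hAdef
  set B := K₂ᴴ * K₂ with hBdef
  have hA : A.PosSemidef := posSemidef_conjTranspose_mul_self K₁
  have hB : B.PosSemidef := posSemidef_conjTranspose_mul_self K₂
  have e1 : (1 + H₁ * Q * H₁ᴴ).det = (1 + A).det := by
    rw [key, det_one_add_mul_comm]
  have e2 : (1 + H₂ * Q * H₂ᴴ).det = (1 + B).det := by
    rw [key, det_one_add_mul_comm]
  have e0 : (1 + fromRows H₁ H₂ * Q * (fromRows H₁ H₂)ᴴ).det = (1 + A + B).det := by
    rw [key, det_one_add_mul_comm, fromRows_mul,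
      conjTranspose_fromRows_eq_fromCols_conjTranspose, fromCols_mul_fromRows,
      add_assoc]
  have h1A : 1 ≤ (1 + A).det := one_le_det_one_add hA
  have h1B : 1 ≤ (1 + B).det := one_le_det_one_add hB
  have h1AB : 1 ≤ (1 + A + B).det := by
    rw [add_assoc]
    exact one_le_det_one_add (hA.add hB)
  have hle : (1 + A + B).det ≤ (1 + A).det * (1 + B).det := det_one_add_add_le hA hB
  rw [e0, e1, e2]
  obtain ⟨r0, i0⟩ := Complex.le_def.mp h1AB
  obtain ⟨r1, i1⟩ := Complex.le_def.mp h1A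
  obtain ⟨r2, i2⟩ := Complex.le_def.mp h1B
  obtain ⟨rr, _⟩ := Complex.le_def.mp hle
  simp only [Complex.one_re, Complex.one_im] at r0 i0 r1 i1 r2 i2
  refine ⟨i0.symm, r0, i1.symm, r1, i2.symm, r2, ?_⟩
  rwa [Complex.mul_re, ← i1, ← i2, mul_zero, sub_zero] at rr
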